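/- Let v ∈ BV(ℝ^{n−1}) ∩ L^∞(ℝ^{n−1}) with v ≥ 0, let b : ℝ^{n−1} → ℝ be a GBV function, and set u₁ = b − v/2, u₂ = b + v/2. Then for H^{n−2}-a.e. x in J_v ∩ J_b with ν_b(x) = ν_v(x) and [b](x) = [v](x)/2, the point x does not belong to the jump set J_{u₁} of u₁. -/

import Mathlib

open scoped RealInnerProductSpace ENNReal
open Metric Set MeasureTheory Filter

variable {d : ℕ}

/-- The set `A` has density `0` at the point `x`. -/
def HasDensityZeroAt (A : Set (EuclideanSpace ℝ (Fin d)))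
    (x : EuclideanSpace ℝ (Fin d)) : Prop :=
  Tendsto (fun ρ : ℝ => volume (A ∩ Metric.ball x ρ) / volume (Metric.ball x ρ))
    (nhdsWithin 0 (Set.Ioi 0)) (nhds 0)

/-- `t` is the approximate limit of `f` at `x` with respect to the set `A`. -/
def ApLim (f : EuclideanSpace ℝ (Fin d) → ℝ) (A : Set (EuclideanSpace ℝ (Fin d)))
    (x : EuclideanSpace ℝ (Fin d)) (t : ℝ) : Prop :=
  ∀ ε : ℝ, 0 < ε → HasDensityZeroAt {y ∈ A | ε < |f y - t|} x

/-- `x` is an (approximate) jump point of `f` with jump direction `ν`, approximate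
upper limit `fup` and approximate lower limit `flo`. -/
def IsJumpPt (f : EuclideanSpace ℝ (Fin d) → ℝ) (x ν : EuclideanSpace ℝ (Fin d))
    (fup flo : ℝ) : Prop :=
  ‖ν‖ = 1 ∧ flo < fup ∧
    ApLim f {y | 0 ≤ ⟪y - x, ν⟫} x fup ∧ ApLim f {y | ⟪y - x, ν⟫ ≤ 0} x flo

/-- The jump set `J_f` of `f`. -/
def jumpSet (f : EuclideanSpace ℝ (Fin d) → ℝ) : Set (EuclideanSpace ℝ (Fin d)) :=
  {x | ∃ ν fup flo, IsJumpPt f x ν fup flo}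

/-- `f` has bounded variation on `ℝ^d`: `f ∈ L¹` and its distributional derivative,
tested against `C¹` compactly supported vector fields of norm at most one via the
divergence, is bounded. -/
def IsBVFun (f : EuclideanSpace ℝ (Fin d) → ℝ) : Prop :=
  Integrable f volume ∧
    ∃ C : ℝ, ∀ φ : EuclideanSpace ℝ (Fin d) → EuclideanSpace ℝ (Fin d),
      ContDiff ℝ 1 φ → HasCompactSupport φ → (∀ x, ‖φ x‖ ≤ 1) →
      (∫ x, f x * LinearMap.trace ℝ (EuclideanSpace ℝ (Fin d))
          (fderiv ℝ φ x : EuclideanSpace ℝ (Fin d) →ₗ[ℝ] EuclideanSpace ℝ (Fin d))) ≤ C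

/-- `f` has locally bounded variation. -/
def IsBVLocFun (f : EuclideanSpace ℝ (Fin d) → ℝ) : Prop :=
  LocallyIntegrable f volume ∧
    ∀ R : ℝ, 0 < R →
      ∃ C : ℝ, ∀ φ : EuclideanSpace ℝ (Fin d) → EuclideanSpace ℝ (Fin d),
        ContDiff ℝ 1 φ → (∀ x ∉ Metric.ball 0 R, φ x = 0) → (∀ x, ‖φ x‖ ≤ 1) →
        (∫ x, f x * LinearMap.trace ℝ (EuclideanSpace ℝ (Fin d))
            (fderiv ℝ φ x : EuclideanSpace ℝ (Fin d) →ₗ[ℝ] EuclideanSpace ℝ (Fin d))) ≤ C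

/-- `f` is of generalized bounded variation: every truncation `τ_M f` is `BV_loc`. -/
def IsGBVFun (f : EuclideanSpace ℝ (Fin d) → ℝ) : Prop :=
  ∀ M : ℝ, 0 < M → IsBVLocFun fun x => max (-M) (min M (f x))

lemma hdz_of_subset_union {A B C : Set (EuclideanSpace ℝ (Fin d))}
    {x : EuclideanSpace ℝ (Fin d)}
    (hB : HasDensityZeroAt B x) (hC : HasDensityZeroAt C x) (h : A ⊆ B ∪ C) :
    HasDensityZeroAt A x := by
  have hsum : Tendsto (fun ρ : ℝ => volume (B ∩ ball x ρ) / volume (ball x ρ)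
      + volume (C ∩ ball x ρ) / volume (ball x ρ)) (nhdsWithin 0 (Ioi 0)) (nhds 0) := by
    simpa using hB.add hC
  refine tendsto_of_tendsto_of_tendsto_of_le_of_le tendsto_const_nhds hsum
    (fun ρ => zero_le) (fun ρ => ?_)
  have hsub : A ∩ ball x ρ ⊆ (B ∩ ball x ρ) ∪ (C ∩ ball x ρ) := by
    rintro y ⟨hyA, hyb⟩
    rcases h hyA with hy | hy
    · exact Or.inl ⟨hy, hyb⟩
    · exact Or.inr ⟨hy, hyb⟩
  calc volume (A ∩ ball x ρ) / volume (ball x ρ)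
      ≤ (volume (B ∩ ball x ρ) + volume (C ∩ ball x ρ)) / volume (ball x ρ) :=
        ENNReal.div_le_div_right ((measure_mono hsub).trans (measure_union_le _ _)) _
    _ = _ := ENNReal.add_div

lemma ApLim.sub_half {bf vf : EuclideanSpace ℝ (Fin d) → ℝ}
    {A : Set (EuclideanSpace ℝ (Fin d))} {x : EuclideanSpace ℝ (Fin d)} {s t : ℝ}
    (hb : ApLim bf A x s) (hv : ApLim vf A x t) :
    ApLim (fun y => bf y - vf y / 2) A x (s - t / 2) := by
  intro ε hε
  refine hdz_of_subset_union (hb (ε/2) (by linarith)) (hv ε hε) ?_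
  rintro y ⟨hyA, hy⟩
  rcases lt_or_ge (ε/2) |bf y - s| with h1 | h1
  · exact Or.inl ⟨hyA, h1⟩
  rcases lt_or_ge ε |vf y - t| with h2 | h2
  · exact Or.inr ⟨hyA, h2⟩
  exfalso
  have e1 : bf y - vf y / 2 - (s - t / 2) = (bf y - s) - (vf y - t) / 2 := by ring
  have e2 : |(bf y - s) - (vf y - t) / 2| ≤ |bf y - s| + |(vf y - t) / 2| := abs_sub _ _
  have e3 : |(vf y - t) / 2| = |vf y - t| / 2 := by rw [abs_div]; norm_num
  rw [e1] at hy
  rw [e3] at e2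
  linarith

lemma ApLim.union {f : EuclideanSpace ℝ (Fin d) → ℝ}
    {A B : Set (EuclideanSpace ℝ (Fin d))} {x : EuclideanSpace ℝ (Fin d)} {t : ℝ}
    (h1 : ApLim f A x t) (h2 : ApLim f B x t) : ApLim f (A ∪ B) x t := by
  intro ε hε
  refine hdz_of_subset_union (h1 ε hε) (h2 ε hε) ?_
  rintro y ⟨hy | hy, h⟩
  · exact Or.inl ⟨hy, h⟩
  · exact Or.inr ⟨hy, h⟩

lemma aplim_unique {f : EuclideanSpace ℝ (Fin d) → ℝ}
    {A : Set (EuclideanSpace ℝ (Fin d))} {x : EuclideanSpace ℝ (Fin d)} {s t : ℝ}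
    (hsym : ∀ y, y ∉ A → (x + x - y) ∈ A)
    (hA : ApLim f A x s) (huniv : ApLim f univ x t) : s = t := by
  by_contra hne
  set ε := |s - t| / 3 with hεdef
  have habs : 0 < |s - t| := abs_pos.mpr (sub_ne_zero.mpr hne)
  have hε0 : 0 < ε := by positivity
  -- lower bound: half-ball
  have hhalf : ∀ ρ : ℝ, volume (ball x ρ) ≤ 2 * volume (A ∩ ball x ρ) := by
    intro ρ
    have hr : MeasurePreserving (fun y : EuclideanSpace ℝ (Fin d) => (x + x) - y)
        volume volume := Measure.measurePreserving_sub_left volume (x + x)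
    have hrm : volume ((fun y : EuclideanSpace ℝ (Fin d) => (x + x) - y) ⁻¹'
        (A ∩ ball x ρ)) = volume (A ∩ ball x ρ) :=
      hr.measure_preimage_emb (MeasurableEquiv.subLeft (x + x)).measurableEmbedding _
    have hsub : ball x ρ ⊆ (A ∩ ball x ρ) ∪
        ((fun y : EuclideanSpace ℝ (Fin d) => (x + x) - y) ⁻¹' (A ∩ ball x ρ)) := by
      intro y hy
      by_cases hyA : y ∈ A
      · exact Or.inl ⟨hyA, hy⟩
      · refine Or.inr ⟨hsym y hyA, ?_⟩
        rw [mem_ball, dist_eq_norm] at hy ⊢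
        have e : (x + x) - y - x = -(y - x) := by abel
        rw [e, norm_neg]
        exact hy
    calc volume (ball x ρ) ≤ _ := (measure_mono hsub).trans (measure_union_le _ _)
      _ = 2 * volume (A ∩ ball x ρ) := by rw [hrm, two_mul]
  -- upper bound: ratio tends to 0
  have hsubAEF : A ⊆ {y ∈ A | ε < |f y - s|} ∪ {y ∈ univ | ε < |f y - t|} := by
    intro y hyA
    rcases lt_or_ge ε |f y - s| with h1 | h1
    · exact Or.inl ⟨hyA, h1⟩
    · refine Or.inr ⟨mem_univ y, ?_⟩
      have tri : |s - t| ≤ |f y - t| + |f y - s| := by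
        have e : s - t = (f y - t) - (f y - s) := by ring
        rw [e]; exact abs_sub _ _
      have : |s - t| = 3 * ε := by rw [hεdef]; ring
      linarith
  have htend : HasDensityZeroAt A x :=
    hdz_of_subset_union (hA ε hε0) (huniv ε hε0) hsubAEF
  have hev : ∀ᶠ ρ in nhdsWithin (0:ℝ) (Ioi 0),
      volume (A ∩ ball x ρ) / volume (ball x ρ) < 2⁻¹ :=
    htend.eventually_lt_const (by norm_num)
  have hmem : ∀ᶠ ρ in nhdsWithin (0:ℝ) (Ioi 0), ρ ∈ Ioi (0:ℝ) :=
    eventually_mem_nhdsWithin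
  obtain ⟨ρ, hρlt, hρpos⟩ := (hev.and hmem).exists
  have h0 : volume (ball x ρ) ≠ 0 := (measure_ball_pos volume x hρpos).ne'
  have htop : volume (ball x ρ) ≠ ⊤ := measure_ball_lt_top.ne
  have hlow : (2⁻¹ : ℝ≥0∞) ≤ volume (A ∩ ball x ρ) / volume (ball x ρ) := by
    rw [ENNReal.le_div_iff_mul_le (Or.inl h0) (Or.inl htop)]
    calc (2⁻¹ : ℝ≥0∞) * volume (ball x ρ) ≤ 2⁻¹ * (2 * volume (A ∩ ball x ρ)) :=
          mul_le_mul_right (hhalf ρ) _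
      _ = volume (A ∩ ball x ρ) := by
          rw [← mul_assoc, ENNReal.inv_mul_cancel (by norm_num) (by norm_num), one_mul]
  exact absurd hρlt (not_lt.mpr hlow)

/-- If `v ∈ BV ∩ L^∞` is nonnegative and `b ∈ GBV`, with `u₁ = b - v/2`, then for
`H^{d-1}`-a.e. `x ∈ J_v ∩ J_b` with `ν_b(x) = ν_v(x)` and `[b](x) = [v](x)/2`,
the point `x` is not a jump point of `u₁`. (Here `d = n - 1`, so `H^{d-1} = H^{n-2}`.) -/
theorem not_jumpPt_of_jump_eq_half
    (v b : EuclideanSpace ℝ (Fin d) → ℝ)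
    (hvBV : IsBVFun v)
    (hvLinf : ∃ M : ℝ, ∀ᵐ x : EuclideanSpace ℝ (Fin d) ∂volume, |v x| ≤ M)
    (hv0 : ∀ x, 0 ≤ v x)
    (hbGBV : IsGBVFun b) :
    ∃ S : Set (EuclideanSpace ℝ (Fin d)), μH[(d : ℝ) - 1] S = 0 ∧
      ∀ x ∉ S, ∀ ν : EuclideanSpace ℝ (Fin d), ∀ vup vlo bup blo : ℝ,
        IsJumpPt v x ν vup vlo → IsJumpPt b x ν bup blo →
        bup - blo = (vup - vlo) / 2 →
        x ∉ jumpSet fun y => b y - v y / 2 := by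
  
  classical
  refine ⟨∅, measure_empty, ?_⟩
  intro x _ ν vup vlo bup blo hv hb hjump
  rintro ⟨ν', fup, flo, hn', hlt', hup', hlo'⟩
  obtain ⟨hν, hlt, hvup, hvlo⟩ := hv
  obtain ⟨_, _, hbup, hblo⟩ := hb
  set t : ℝ := bup - vup / 2 with ht
  have ht2 : blo - vlo / 2 = t := by rw [ht]; linarith
  have hupA : ApLim (fun y => b y - v y / 2) {y | 0 ≤ ⟪y - x, ν⟫} x t :=
    hbup.sub_half hvup
  have hloA : ApLim (fun y => b y - v y / 2) {y | ⟪y - x, ν⟫ ≤ 0} x t :=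
    ht2 ▸ hblo.sub_half hvlo
  have hU : {y : EuclideanSpace ℝ (Fin d) | 0 ≤ ⟪y - x, ν⟫} ∪
      {y : EuclideanSpace ℝ (Fin d) | ⟪y - x, ν⟫ ≤ 0} = univ := by
    ext y
    simpa using le_total (0:ℝ) ⟪y - x, ν⟫
  have huniv : ApLim (fun y => b y - v y / 2) univ x t := by
    have := hupA.union hloA
    rwa [hU] at this
  have hsym_up : ∀ y, y ∉ {y : EuclideanSpace ℝ (Fin d) | 0 ≤ ⟪y - x, ν'⟫} →
      (x + x - y) ∈ {y : EuclideanSpace ℝ (Fin d) | 0 ≤ ⟪y - x, ν'⟫} := by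
    intro y hy
    simp only [mem_setOf_eq, not_le] at hy ⊢
    have e : (x + x - y) - x = -(y - x) := by abel
    rw [e, inner_neg_left]
    linarith
  have hsym_lo : ∀ y, y ∉ {y : EuclideanSpace ℝ (Fin d) | ⟪y - x, ν'⟫ ≤ 0} →
      (x + x - y) ∈ {y : EuclideanSpace ℝ (Fin d) | ⟪y - x, ν'⟫ ≤ 0} := by
    intro y hy
    simp only [mem_setOf_eq, not_le] at hy ⊢
    have e : (x + x - y) - x = -(y - x) := by abel
    rw [e, inner_neg_left]
    linarith
  have h1 : fup = t := aplim_unique hsym_up hup' huniv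
  have h2 : flo = t := aplim_unique hsym_lo hlo' huniv
  rw [h1, h2] at hlt'
  exact lt_irrefl t hlt'
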